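/- Let g(k) = ∫_1^∞ e^{−kx}·(x + log x)·x^{−(1+k)} dx for k > 0 (so that g(k) = −f′(k) for f(k) = ∫_1^∞ e^{−kx} x^{−(1+k)} dx). Then lim_{k→0⁺} k·g(k) = 1. -/

import Mathlib

open Filter Set MeasureTheory

/-- `g(k) = ∫_1^∞ e^{-kx} (x + log x) x^{-(1+k)} dx = -f'(k)` for
`f(k) = ∫_1^∞ e^{-kx} x^{-(1+k)} dx`. -/
noncomputable def g (k : ℝ) : ℝ :=
  ∫ x in Set.Ioi (1 : ℝ), Real.exp (-k * x) * (x + Real.log x) * x ^ (-(1 + k))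

set_option maxHeartbeats 1000000 in
/-- `lim_{k→0⁺} k·g(k) = 1`, i.e. `f'(k) ∼ -1/k` as `k → 0⁺`. -/
theorem k_mul_g_tendsto_one :
    Tendsto (fun k : ℝ => k * g k) (nhdsWithin 0 (Set.Ioi 0)) (nhds 1) := by
  classical
  set φ : ℝ → ℝ → ℝ := fun k u =>
    Real.exp (-u) * (u / k + Real.log (u / k)) * (u / k) ^ (-(1 + k)) with hφ
  set F : ℝ → ℝ → ℝ := fun k => (Set.Ioi k).indicator (φ k) with hF
  set f : ℝ → ℝ := (Set.Ioi (0:ℝ)).indicator (fun u => Real.exp (-u)) with hf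
  set bound : ℝ → ℝ := (Set.Ioi (0:ℝ)).indicator (fun u => 2 * Real.exp (-u)) with hbd
  -- key change of variables: k * g k = ∫ F k
  have hkey : ∀ k ∈ Set.Ioi (0:ℝ), k * g k = ∫ u, F k u := by
    intro k hk
    have hk0 : (0:ℝ) < k := hk
    have h1 : g k = ∫ x in Set.Ioi (1:ℝ), φ k (k * x) := by
      unfold g
      congr 1
      funext x
      simp only [hφ]
      rw [mul_div_cancel_left₀ _ hk0.ne']
      ring_nf
    rw [h1, integral_comp_mul_left_Ioi (φ k) 1 hk0, mul_one, smul_eq_mul,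
      ← mul_assoc, mul_inv_cancel₀ hk0.ne', one_mul,
      ← integral_indicator measurableSet_Ioi]
  -- measurability
  have hmeas : ∀ᶠ k in nhdsWithin (0:ℝ) (Set.Ioi 0),
      AEStronglyMeasurable (F k) volume := by
    refine Eventually.of_forall fun k => ?_
    refine (Measurable.indicator ?_ measurableSet_Ioi).aestronglyMeasurable
    simp only [hφ]
    have h1 : Measurable fun u : ℝ => Real.exp (-u) := Real.measurable_exp.comp measurable_neg
    have h2 : Measurable fun u : ℝ => u / k := measurable_id.div_const k
    have h3 : Measurable fun u : ℝ => (u / k) ^ (-(1 + k)) := by measurability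
    exact (h1.mul (h2.add (Real.measurable_log.comp h2))).mul h3
  -- the uniform bound
  have hbound : ∀ᶠ k in nhdsWithin (0:ℝ) (Set.Ioi 0),
      ∀ᵐ u : ℝ, ‖F k u‖ ≤ bound u := by
    filter_upwards [self_mem_nhdsWithin] with k hk
    have hk0 : (0:ℝ) < k := hk
    refine Eventually.of_forall fun u => ?_
    by_cases hu : u ∈ Set.Ioi k
    · have hu0 : (0:ℝ) < u := lt_trans hk0 hu
      have hFu : F k u = φ k u := indicator_of_mem hu (φ k)
      have hbu : bound u = 2 * Real.exp (-u) := indicator_of_mem hu0 _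
      set t : ℝ := u / k with ht
      have ht1 : 1 < t := (one_lt_div hk0).2 hu
      have ht0 : (0:ℝ) < t := lt_trans one_pos ht1
      have hlog0 : 0 ≤ Real.log t := Real.log_nonneg ht1.le
      have hpow0 : 0 ≤ t ^ (-(1 + k)) := Real.rpow_nonneg ht0.le _
      -- t * t^(-(1+k)) = t^(-k) ≤ 1
      have e1 : t * t ^ (-(1 + k)) = t ^ (-k) := by
        have h := Real.rpow_add ht0 1 (-(1 + k))
        rw [Real.rpow_one] at h
        rw [← h]
        congr 1
        ring
      have e1' : t ^ (-k) ≤ 1 :=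
        Real.rpow_le_one_of_one_le_of_nonpos ht1.le (by linarith)
      -- log t * t^(-(1+k)) ≤ log t / t ≤ 1
      have e2 : t ^ (-(1 + k)) ≤ t ^ (-1 : ℝ) :=
        Real.rpow_le_rpow_of_exponent_le ht1.le (by linarith)
      have e3 : Real.log t * t ^ (-(1 + k)) ≤ Real.log t * t⁻¹ := by
        rw [← Real.rpow_neg_one t]
        exact mul_le_mul_of_nonneg_left e2 hlog0
      have e4 : Real.log t * t⁻¹ ≤ 1 := by
        have : Real.log t ≤ t := (Real.log_le_sub_one_of_pos ht0).trans (by linarith)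
        calc Real.log t * t⁻¹ ≤ t * t⁻¹ :=
              mul_le_mul_of_nonneg_right this (inv_nonneg.2 ht0.le)
          _ = 1 := mul_inv_cancel₀ ht0.ne'
      have hsum : (t + Real.log t) * t ^ (-(1 + k)) ≤ 2 := by
        have : (t + Real.log t) * t ^ (-(1 + k))
            = t * t ^ (-(1 + k)) + Real.log t * t ^ (-(1 + k)) := by ring
        rw [this, e1]
        linarith
      have hnn : 0 ≤ φ k u := by
        simp only [hφ, ← ht]
        have : 0 ≤ t + Real.log t := by linarith
        positivity
      rw [hFu, hbu, Real.norm_eq_abs, abs_of_nonneg hnn]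
      simp only [hφ, ← ht]
      calc Real.exp (-u) * (t + Real.log t) * t ^ (-(1 + k))
          = Real.exp (-u) * ((t + Real.log t) * t ^ (-(1 + k))) := by ring
        _ ≤ Real.exp (-u) * 2 :=
            mul_le_mul_of_nonneg_left hsum (Real.exp_pos _).le
        _ = 2 * Real.exp (-u) := by ring
    · have hFu : F k u = 0 := indicator_of_notMem hu (φ k)
      rw [hFu, norm_zero]
      exact indicator_nonneg (fun x _ => by positivity) u
  -- integrability of the bound
  have hint : Integrable bound volume := by
    have h1 : IntegrableOn (fun u => 2 * Real.exp (-u)) (Set.Ioi (0:ℝ)) := by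
      have := (exp_neg_integrableOn_Ioi 0 (one_pos)).const_mul 2
      simp only [neg_mul, one_mul] at this
      exact this
    exact h1.integrable_indicator measurableSet_Ioi
  -- a.e. pointwise convergence
  have hlim : ∀ᵐ u : ℝ, Tendsto (fun k => F k u) (nhdsWithin 0 (Set.Ioi 0)) (nhds (f u)) := by
    have h0 : ∀ᵐ u : ℝ, u ≠ 0 := by
      rw [ae_iff]
      simpa using measure_singleton (0:ℝ)
    filter_upwards [h0] with u hu0
    rcases lt_or_gt_of_ne hu0 with hu | hu
    · -- u < 0 : everything is 0
      have hfu : f u = 0 := indicator_of_notMem (by simp [hu.not_gt, not_lt.2 hu.le]) _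
      rw [hfu]
      refine tendsto_const_nhds.congr' ?_
      filter_upwards [self_mem_nhdsWithin] with k hk
      exact (indicator_of_notMem (by simp; linarith [mem_Ioi.1 hk]) (φ k)).symm
    · -- u > 0
      have hfu : f u = Real.exp (-u) := indicator_of_mem hu _
      rw [hfu]
      have hmem : Set.Ioo (0:ℝ) u ∈ nhdsWithin (0:ℝ) (Set.Ioi 0) :=
        Ioo_mem_nhdsGT_of_mem ⟨le_refl 0, hu⟩
      -- B k = (u/k)^(-k) → 1
      have htop : Tendsto (fun k : ℝ => u / k) (nhdsWithin 0 (Set.Ioi 0)) atTop := by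
        have := (tendsto_inv_nhdsGT_zero (𝕜 := ℝ)).const_mul_atTop hu
        simpa [div_eq_mul_inv] using this
      have hlogk : Tendsto (fun k : ℝ => Real.log k * k) (nhdsWithin 0 (Set.Ioi 0)) (nhds 0) := by
        simpa using _root_.tendsto_log_mul_rpow_nhdsGT_zero (r := 1) one_pos
      have hB0 : Tendsto (fun k : ℝ => -k * Real.log (u / k))
          (nhdsWithin 0 (Set.Ioi 0)) (nhds 0) := by
        have h2 : Tendsto (fun k : ℝ => k * Real.log u) (nhdsWithin 0 (Set.Ioi 0)) (nhds 0) := by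
          have h2' := Tendsto.mul_const (Real.log u) (continuous_id.tendsto (0:ℝ))
          simp only [id_eq, zero_mul] at h2'
          exact h2'.mono_left nhdsWithin_le_nhds
        have h3 : Tendsto (fun k : ℝ => -(k * Real.log u) + Real.log k * k)
            (nhdsWithin 0 (Set.Ioi 0)) (nhds 0) := by
          simpa using h2.neg.add hlogk
        refine h3.congr' ?_
        filter_upwards [hmem] with k hk
        rw [Real.log_div hu.ne' hk.1.ne']
        ring
      have hB : Tendsto (fun k : ℝ => (u / k) ^ (-k))
          (nhdsWithin 0 (Set.Ioi 0)) (nhds 1) := by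
        have := (Real.continuous_exp.tendsto 0).comp hB0
        rw [Real.exp_zero] at this
        refine this.congr' ?_
        filter_upwards [hmem] with k hk
        rw [Function.comp_apply, Real.rpow_def_of_pos (div_pos hu hk.1), mul_comm]
      -- C k = log(u/k) * (u/k)^(-(1+k)) → 0
      have hD : Tendsto (fun k : ℝ => Real.log (u / k) / (u / k))
          (nhdsWithin 0 (Set.Ioi 0)) (nhds 0) :=
        Real.isLittleO_log_id_atTop.tendsto_div_nhds_zero.comp htop
      have hC : Tendsto (fun k : ℝ => Real.log (u / k) * (u / k) ^ (-(1 + k)))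
          (nhdsWithin 0 (Set.Ioi 0)) (nhds 0) := by
        refine tendsto_of_tendsto_of_tendsto_of_le_of_le' tendsto_const_nhds hD ?_ ?_
        · filter_upwards [hmem] with k hk
          have ht1 : 1 < u / k := (one_lt_div hk.1).2 hk.2
          have ht0 : (0:ℝ) < u / k := lt_trans one_pos ht1
          exact mul_nonneg (Real.log_nonneg ht1.le) (Real.rpow_nonneg ht0.le _)
        · filter_upwards [hmem] with k hk
          have ht1 : 1 < u / k := (one_lt_div hk.1).2 hk.2
          have ht0 : (0:ℝ) < u / k := lt_trans one_pos ht1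
          have e2 : (u / k) ^ (-(1 + k)) ≤ (u / k) ^ (-1 : ℝ) :=
            Real.rpow_le_rpow_of_exponent_le ht1.le (by linarith [hk.1])
          calc Real.log (u / k) * (u / k) ^ (-(1 + k))
              ≤ Real.log (u / k) * (u / k) ^ (-1 : ℝ) :=
                mul_le_mul_of_nonneg_left e2 (Real.log_nonneg ht1.le)
            _ = Real.log (u / k) / (u / k) := by
                rw [Real.rpow_neg_one]; exact (div_eq_mul_inv _ _).symm
      -- combine
      have hA : Tendsto (fun k : ℝ => (u / k + Real.log (u / k)) * (u / k) ^ (-(1 + k)))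
          (nhdsWithin 0 (Set.Ioi 0)) (nhds 1) := by
        have hsum := hB.add hC
        rw [add_zero] at hsum
        refine hsum.congr' ?_
        filter_upwards [hmem] with k hk
        have ht1 : 1 < u / k := (one_lt_div hk.1).2 hk.2
        have ht0 : (0:ℝ) < u / k := lt_trans one_pos ht1
        have e1 : (u / k) * (u / k) ^ (-(1 + k)) = (u / k) ^ (-k) := by
          have h := Real.rpow_add ht0 1 (-(1 + k))
          rw [Real.rpow_one] at h
          rw [← h]
          congr 1
          ring
        rw [← e1]
        ring
      have hφlim : Tendsto (fun k => φ k u) (nhdsWithin 0 (Set.Ioi 0))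
          (nhds (Real.exp (-u))) := by
        have := hA.const_mul (Real.exp (-u))
        rw [mul_one] at this
        refine this.congr' ?_
        filter_upwards [hmem] with k hk
        simp only [hφ]
        ring
      refine hφlim.congr' ?_
      filter_upwards [hmem] with k hk
      exact (indicator_of_mem (mem_Ioi.2 hk.2) (φ k)).symm
  -- conclude via dominated convergence
  have main := tendsto_integral_filter_of_dominated_convergence bound hmeas hbound hint hlim
  have hfint : (∫ u, f u) = 1 := by
    rw [hf, integral_indicator measurableSet_Ioi, integral_exp_neg_Ioi_zero]
  rw [hfint] at main
  refine main.congr' ?_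
  filter_upwards [self_mem_nhdsWithin] with k hk
  exact (hkey k hk).symm
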